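/- Let r be a real random variable with P(r ≥ -1) = 1, P(r > 0) > 0, P(r < 0) > 0, E[(ln(1+r))²] < ∞, and suppose there exists f ∈ (0,1) with E[ln(1 + f r)] > 0, so that the Kelly fraction f* ∈ (0,1), the unique zero of g_r'(f) = E[r/(1 + f r)], exists. Then the asymptotic Sharpe ratio SR_r(f) = g_r(f)/√(υ_r(f)) is differentiable at f* with SR_r'(f*) < 0; in particular, SR_r is strictly decreasing on some neighborhood of f*. -/

import Mathlib

open MeasureTheory ProbabilityTheory Real Filter Topology

section PtLemmas

lemma pt_pos {f x : ℝ} (hx : -1 ≤ x) (hf0 : 0 ≤ f) (hf1 : f < 1) : 0 < 1 + f * x := by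
  rcases le_or_gt 0 x with h | h
  · nlinarith
  · nlinarith

lemma pt_neg1 {f x : ℝ} (hx : -1 ≤ x) (hf0 : 0 < f) (hf1 : f < 1) : -1 < f * x := by
  rcases le_or_gt 0 x with h | h
  · nlinarith
  · nlinarith

lemma pt_log_bound {a b f x : ℝ} (hx : -1 ≤ x) (ha : 0 < a) (hb : b < 1)
    (hf : f ∈ Set.Icc a b) : |Real.log (1 + f * x)| ≤ |Real.log (1 + x)| + |Real.log (1 - b)| := by
  obtain ⟨hfa, hfb⟩ := hf
  have hf0 : 0 < f := ha.trans_le hfa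
  have hf1 : f < 1 := lt_of_le_of_lt hfb hb
  have hden : 0 < 1 + f * x := pt_pos hx hf0.le hf1
  rcases le_or_gt 0 x with h | h
  · have h1 : (1:ℝ) ≤ 1 + f * x := by nlinarith
    have h2 : 1 + f * x ≤ 1 + x := by nlinarith
    have hl0 : 0 ≤ Real.log (1 + f * x) := Real.log_nonneg h1
    have hl1 : Real.log (1 + f * x) ≤ Real.log (1 + x) := Real.log_le_log hden h2
    have : 0 ≤ Real.log (1 + x) := hl0.trans hl1
    rw [abs_of_nonneg hl0, abs_of_nonneg this]
    linarith [abs_nonneg (Real.log (1 - b))]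
  · have hb0 : 0 < 1 - b := by linarith
    have h1 : 1 - b ≤ 1 + f * x := by nlinarith
    have h2 : 1 + f * x ≤ 1 := by nlinarith
    have hl0 : Real.log (1 + f * x) ≤ 0 := Real.log_nonpos (by linarith) h2
    have hl1 : Real.log (1 - b) ≤ Real.log (1 + f * x) := Real.log_le_log hb0 h1
    have hl2 : Real.log (1 - b) ≤ 0 := Real.log_nonpos (by linarith) (by linarith)
    rw [abs_of_nonpos hl0, abs_of_nonpos hl2]
    linarith [abs_nonneg (Real.log (1 + x))]

lemma pt_Y_bound {a b f x : ℝ} (hx : -1 ≤ x) (ha : 0 < a) (hb : b < 1)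
    (hf : f ∈ Set.Icc a b) : |x / (1 + f * x)| ≤ max (1 / a) (1 / (1 - b)) := by
  obtain ⟨hfa, hfb⟩ := hf
  have hf0 : 0 < f := ha.trans_le hfa
  have hf1 : f < 1 := lt_of_le_of_lt hfb hb
  have hden : 0 < 1 + f * x := pt_pos hx hf0.le hf1
  have hb0 : 0 < 1 - b := by linarith
  rcases le_or_gt 0 x with h | h
  · refine le_trans ?_ (le_max_left _ _)
    rw [abs_of_nonneg (div_nonneg h hden.le), div_le_div_iff₀ hden ha]
    nlinarith
  · refine le_trans ?_ (le_max_right _ _)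
    rw [abs_of_nonpos (div_nonpos_of_nonpos_of_nonneg h.le hden.le), neg_div',
      div_le_div_iff₀ hden hb0]
    nlinarith

lemma pt_log_ge {u : ℝ} (hu : -1 < u) : u / (1 + u) ≤ Real.log (1 + u) := by
  have h0 : 0 < 1 + u := by linarith
  have := Real.log_le_sub_one_of_pos (inv_pos.2 h0)
  rw [Real.log_inv] at this
  have h2 : -(1 + u)⁻¹ + 1 ≤ Real.log (1 + u) := by linarith
  calc u / (1 + u) = -(1 + u)⁻¹ + 1 := by field_simp; ring
    _ ≤ _ := h2

lemma pt_log_gt {u : ℝ} (hu : -1 < u) (hu0 : u ≠ 0) : u / (1 + u) < Real.log (1 + u) := by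
  have h0 : 0 < 1 + u := by linarith
  have h1 : (1 + u)⁻¹ ≠ 1 := by
    intro h
    have : (1 + u) = 1 := by field_simp at h; linarith
    exact hu0 (by linarith)
  have := Real.log_lt_sub_one_of_pos (inv_pos.2 h0) h1
  rw [Real.log_inv] at this
  have h2 : -(1 + u)⁻¹ + 1 < Real.log (1 + u) := by linarith
  calc u / (1 + u) = -(1 + u)⁻¹ + 1 := by field_simp; ring
    _ < _ := h2

lemma pt_log_ge' {f x : ℝ} (hx : -1 ≤ x) (hf0 : 0 < f) (hf1 : f < 1) :
    f * (x / (1 + f * x)) ≤ Real.log (1 + f * x) := by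
  have hu := pt_neg1 hx hf0 hf1
  have h := pt_log_ge hu
  rwa [mul_div_assoc] at h

lemma pt_log_gt' {f x : ℝ} (hx : -1 ≤ x) (hf0 : 0 < f) (hf1 : f < 1) (hx0 : x ≠ 0) :
    f * (x / (1 + f * x)) < Real.log (1 + f * x) := by
  have hu := pt_neg1 hx hf0 hf1
  have h := pt_log_gt hu (mul_ne_zero hf0.ne' hx0)
  rwa [mul_div_assoc] at h

lemma pt_prod_nonneg' {f x : ℝ} (hx : -1 ≤ x) (hf0 : 0 < f) (hf1 : f < 1) :
    0 ≤ Real.log (1 + f * x) * (x / (1 + f * x)) := by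
  have hden := pt_pos hx hf0.le hf1
  rcases le_or_gt 0 x with h | h
  · exact mul_nonneg (Real.log_nonneg (by nlinarith)) (div_nonneg h hden.le)
  · have h1 : Real.log (1 + f * x) ≤ 0 := Real.log_nonpos (by nlinarith) (by nlinarith)
    have h2 : x / (1 + f * x) ≤ 0 := div_nonpos_of_nonpos_of_nonneg h.le hden.le
    nlinarith

lemma pt_prod_pos' {f x : ℝ} (hx : -1 ≤ x) (hf0 : 0 < f) (hf1 : f < 1) (hx0 : x ≠ 0) :
    0 < Real.log (1 + f * x) * (x / (1 + f * x)) := by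
  have hden := pt_pos hx hf0.le hf1
  rcases lt_or_gt_of_ne hx0 with h | h
  · have h1 : Real.log (1 + f * x) < 0 := Real.log_neg (by nlinarith) (by nlinarith)
    have h2 : x / (1 + f * x) < 0 := div_neg_of_neg_of_pos h hden
    nlinarith
  · exact mul_pos (Real.log_pos (by nlinarith)) (div_pos h hden)

end PtLemmas

set_option maxHeartbeats 2000000 in
theorem sharpe_ratio_decreasing_at_kelly
    {Ω : Type*} [MeasurableSpace Ω] (P : Measure Ω) [IsProbabilityMeasure P]
    (r : Ω → ℝ) (hmeas : Measurable r)
    (h1 : ∀ᵐ ω ∂P, -1 ≤ r ω)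
    (hpos : 0 < P {ω | 0 < r ω})
    (hneg : 0 < P {ω | r ω < 0})
    (hsq : Integrable (fun ω => (Real.log (1 + r ω)) ^ 2) P)
    (hedge : ∃ f ∈ Set.Ioo (0 : ℝ) 1, 0 < ∫ ω, Real.log (1 + f * r ω) ∂P)
    (fstar : ℝ) (hfstar : fstar ∈ Set.Ioo (0 : ℝ) 1)
    (hzero : ∫ ω, r ω / (1 + fstar * r ω) ∂P = 0)
    (huniq : ∀ f ∈ Set.Ioo (0 : ℝ) 1, ∫ ω, r ω / (1 + f * r ω) ∂P = 0 → f = fstar) :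
    ∃ s : ℝ, s < 0 ∧
      HasDerivAt
        (fun f => (∫ ω, Real.log (1 + f * r ω) ∂P)
          / Real.sqrt (variance (fun ω => Real.log (1 + f * r ω)) P)) s fstar
      ∧ ∃ ε > 0, StrictAntiOn
          (fun f => (∫ ω, Real.log (1 + f * r ω) ∂P)
            / Real.sqrt (variance (fun ω => Real.log (1 + f * r ω)) P))
          (Set.Ioo (fstar - ε) (fstar + ε)) := by
  clear hedge huniq
  obtain ⟨hf0, hf1⟩ := hfstar
  set a : ℝ := fstar / 2 with ha_def
  set b : ℝ := (fstar + 1) / 2 with hb_def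
  have ha0 : 0 < a := by simp only [ha_def]; linarith
  have hb1 : b < 1 := by simp only [hb_def]; linarith
  have haf : a < fstar := by simp only [ha_def]; linarith
  have hfb : fstar < b := by simp only [hb_def]; linarith
  have hficc : fstar ∈ Set.Icc a b := ⟨haf.le, hfb.le⟩
  set c : ℝ := |Real.log (1 - b)| with hc_def
  set C : ℝ := max (1 / a) (1 / (1 - b)) with hC_def
  set B : Ω → ℝ := fun ω => |Real.log (1 + r ω)| + c with hB_def
  have hB0 : ∀ ω, 0 ≤ B ω := fun ω => by
    simp only [hB_def]; positivity
  -- measurability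
  have hLmeas : ∀ f : ℝ, Measurable fun ω => Real.log (1 + f * r ω) := fun f =>
    Real.measurable_log.comp (measurable_const.add (measurable_const.mul hmeas))
  have hYmeas : ∀ f : ℝ, Measurable fun ω => r ω / (1 + f * r ω) := fun f =>
    hmeas.div (measurable_const.add (measurable_const.mul hmeas))
  have hDmeas : ∀ f : ℝ, Measurable fun ω =>
      2 * Real.log (1 + f * r ω) * (r ω / (1 + f * r ω)) := fun f =>
    ((hLmeas f).const_mul 2).mul (hYmeas f)
  -- integrability of the bounds
  have hlogint : Integrable (fun ω => Real.log (1 + r ω)) P := by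
    have hm : Measurable fun ω => Real.log (1 + r ω) :=
      Real.measurable_log.comp (measurable_const.add hmeas)
    exact ((memLp_two_iff_integrable_sq hm.aestronglyMeasurable).2 hsq).integrable one_le_two
  have hBint : Integrable B P := hlogint.abs.add (integrable_const c)
  have hB2int : Integrable (fun ω => B ω ^ 2) P := by
    have h := (hsq.add ((hlogint.abs.const_mul (2 * c)).add (integrable_const (c ^ 2))))
    refine h.congr (Filter.Eventually.of_forall fun ω => ?_)
    simp only [hB_def, Pi.add_apply]
    have h2 := sq_abs (Real.log (1 + r ω))
    ring_nf
    ring_nf at h2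
    linarith
  -- pointwise bounds, a.e.
  have hLb : ∀ f ∈ Set.Icc a b, ∀ᵐ ω ∂P, ‖Real.log (1 + f * r ω)‖ ≤ B ω := fun f hf =>
    h1.mono fun ω hω => by
      rw [Real.norm_eq_abs]; exact pt_log_bound hω ha0 hb1 hf
  have hYb : ∀ f ∈ Set.Icc a b, ∀ᵐ ω ∂P, ‖r ω / (1 + f * r ω)‖ ≤ C := fun f hf =>
    h1.mono fun ω hω => by
      rw [Real.norm_eq_abs]; exact pt_Y_bound hω ha0 hb1 hf
  -- integrability at each parameter
  have hLint : ∀ f ∈ Set.Icc a b, Integrable (fun ω => Real.log (1 + f * r ω)) P :=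
    fun f hf => hBint.mono' (hLmeas f).aestronglyMeasurable (hLb f hf)
  have hYint : ∀ f ∈ Set.Icc a b, Integrable (fun ω => r ω / (1 + f * r ω)) P :=
    fun f hf => (integrable_const C).mono' (hYmeas f).aestronglyMeasurable (hYb f hf)
  have hL2int : ∀ f ∈ Set.Icc a b,
      Integrable (fun ω => (Real.log (1 + f * r ω)) ^ 2) P := by
    intro f hf
    refine hB2int.mono' ((hLmeas f).pow_const 2).aestronglyMeasurable ?_
    filter_upwards [hLb f hf] with ω hω
    rw [Real.norm_eq_abs] at hω ⊢
    rw [abs_pow, sq_abs]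
    calc Real.log (1 + f * r ω) ^ 2 = |Real.log (1 + f * r ω)| ^ 2 := (sq_abs _).symm
      _ ≤ B ω ^ 2 := pow_le_pow_left₀ (abs_nonneg _) hω 2
  have hMem2 : ∀ f ∈ Set.Icc a b, MemLp (fun ω => Real.log (1 + f * r ω)) 2 P :=
    fun f hf => (memLp_two_iff_integrable_sq (hLmeas f).aestronglyMeasurable).2 (hL2int f hf)
  have hbnd2 : Integrable (fun ω => 2 * B ω * C) P := (hBint.const_mul 2).mul_const C
  have hDint : ∀ f ∈ Set.Icc a b,
      Integrable (fun ω => 2 * Real.log (1 + f * r ω) * (r ω / (1 + f * r ω))) P := by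
    intro f hf
    refine hbnd2.mono' (hDmeas f).aestronglyMeasurable ?_
    filter_upwards [hLb f hf, hYb f hf] with ω h₁ h₂
    rw [Real.norm_eq_abs] at h₁ h₂ ⊢
    have hC0 : 0 ≤ C := (abs_nonneg _).trans h₂
    rw [abs_mul, abs_mul, abs_two]
    have hm := mul_le_mul h₁ h₂ (abs_nonneg _) (hB0 ω)
    nlinarith [hm]
  -- derivative of g
  have hball : ∀ f₀ ∈ Set.Ioo a b,
      Metric.ball f₀ (min (f₀ - a) (b - f₀)) ⊆ Set.Icc a b := by
    intro f₀ hf₀ x hx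
    rw [Real.ball_eq_Ioo] at hx
    obtain ⟨hx1, hx2⟩ := hx
    constructor
    · have := min_le_left (f₀ - a) (b - f₀); linarith
    · have := min_le_right (f₀ - a) (b - f₀); linarith
  have hgderiv : ∀ f₀ ∈ Set.Ioo a b,
      HasDerivAt (fun f => ∫ ω, Real.log (1 + f * r ω) ∂P)
        (∫ ω, r ω / (1 + f₀ * r ω) ∂P) f₀ := by
    intro f₀ hf₀
    have hε : 0 < min (f₀ - a) (b - f₀) := lt_min (by linarith [hf₀.1]) (by linarith [hf₀.2])
    refine (hasDerivAt_integral_of_dominated_loc_of_deriv_le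
      (F' := fun x ω => r ω / (1 + x * r ω)) (bound := fun _ => C) (Metric.ball_mem_nhds f₀ hε)
      (Filter.Eventually.of_forall fun x => (hLmeas x).aestronglyMeasurable)
      (hLint f₀ (Set.Ioo_subset_Icc_self hf₀))
      (hYmeas f₀).aestronglyMeasurable
      ?_ (integrable_const C) ?_).2
    · filter_upwards [h1] with ω hω x hx
      rw [Real.norm_eq_abs]
      exact pt_Y_bound hω ha0 hb1 (hball f₀ hf₀ hx)
    · filter_upwards [h1] with ω hω x hx
      have hxicc := hball f₀ hf₀ hx
      have hden : 0 < 1 + x * r ω :=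
        pt_pos hω (ha0.trans_le hxicc.1).le (lt_of_le_of_lt hxicc.2 hb1)
      have h0 : HasDerivAt (fun y : ℝ => 1 + y * r ω) (r ω) x := by
        simpa using ((hasDerivAt_id x).mul_const (r ω)).const_add 1
      have h2 := (Real.hasDerivAt_log (ne_of_gt hden)).comp x h0
      simpa [Function.comp_def, div_eq_inv_mul] using h2
  -- derivative of second moment
  have hm2deriv : ∀ f₀ ∈ Set.Ioo a b,
      HasDerivAt (fun f => ∫ ω, (Real.log (1 + f * r ω)) ^ 2 ∂P)
        (∫ ω, 2 * Real.log (1 + f₀ * r ω) * (r ω / (1 + f₀ * r ω)) ∂P) f₀ := by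
    intro f₀ hf₀
    have hε : 0 < min (f₀ - a) (b - f₀) := lt_min (by linarith [hf₀.1]) (by linarith [hf₀.2])
    refine (hasDerivAt_integral_of_dominated_loc_of_deriv_le
      (F' := fun x ω => 2 * Real.log (1 + x * r ω) * (r ω / (1 + x * r ω)))
      (bound := fun ω => 2 * B ω * C) (Metric.ball_mem_nhds f₀ hε)
      (Filter.Eventually.of_forall fun x => ((hLmeas x).pow_const 2).aestronglyMeasurable)
      (hL2int f₀ (Set.Ioo_subset_Icc_self hf₀))
      (hDmeas f₀).aestronglyMeasurable
      ?_ hbnd2 ?_).2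
    · filter_upwards [h1] with ω hω x hx
      have hxicc := hball f₀ hf₀ hx
      have h₁ := pt_log_bound hω ha0 hb1 hxicc
      have h₂ := pt_Y_bound hω ha0 hb1 hxicc
      rw [Real.norm_eq_abs, abs_mul, abs_mul, abs_two]
      have hC0 : 0 ≤ C := (abs_nonneg _).trans h₂
      have hm := mul_le_mul h₁ h₂ (abs_nonneg _) (hB0 ω)
      nlinarith [hm]
    · filter_upwards [h1] with ω hω x hx
      have hxicc := hball f₀ hf₀ hx
      have hden : 0 < 1 + x * r ω :=
        pt_pos hω (ha0.trans_le hxicc.1).le (lt_of_le_of_lt hxicc.2 hb1)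
      have h0 : HasDerivAt (fun y : ℝ => 1 + y * r ω) (r ω) x := by
        simpa using ((hasDerivAt_id x).mul_const (r ω)).const_add 1
      have h2 : HasDerivAt (fun y => Real.log (1 + y * r ω)) (r ω / (1 + x * r ω)) x := by
        have := (Real.hasDerivAt_log (ne_of_gt hden)).comp x h0
        simpa [Function.comp_def, div_eq_inv_mul] using this
      have h3 := h2.pow 2
      refine h3.congr_deriv ?_
      ring
  -- variance identity and positivity
  have hvar_eq : ∀ f ∈ Set.Icc a b,
      variance (fun ω => Real.log (1 + f * r ω)) P =
        (∫ ω, (Real.log (1 + f * r ω)) ^ 2 ∂P) -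
          (∫ ω, Real.log (1 + f * r ω) ∂P) ^ 2 := by
    intro f hf
    rw [variance_eq_sub (hMem2 f hf)]
    congr 1
  have hub : ∀ f ∈ Set.Icc a b, 0 < f ∧ f < 1 := fun f hf =>
    ⟨ha0.trans_le hf.1, lt_of_le_of_lt hf.2 hb1⟩
  have hvarpos : ∀ f ∈ Set.Icc a b,
      0 < (∫ ω, (Real.log (1 + f * r ω)) ^ 2 ∂P) -
        (∫ ω, Real.log (1 + f * r ω) ∂P) ^ 2 := by
    intro f hf
    obtain ⟨hfp, hfl⟩ := hub f hf
    rw [← hvar_eq f hf]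
    rw [variance_eq_integral (hMem2 f hf).aemeasurable]
    have hint : Integrable
        (fun ω => (Real.log (1 + f * r ω) - ∫ ω', Real.log (1 + f * r ω') ∂P) ^ 2) P := by
      have h := ((hMem2 f hf).sub (memLp_const (∫ ω', Real.log (1 + f * r ω') ∂P))).integrable_sq
      refine h.congr (Filter.Eventually.of_forall fun ω => ?_)
      simp [Pi.sub_apply]
    set μ := ∫ ω', Real.log (1 + f * r ω') ∂P with hμ
    show (0:ℝ) < ∫ ω, (Real.log (1 + f * r ω) - μ) ^ 2 ∂P
    rw [integral_pos_iff_support_of_nonneg_ae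
      (Filter.Eventually.of_forall fun ω => sq_nonneg _) hint]
    rcases le_or_gt μ 0 with hμ0 | hμ0
    · refine lt_of_lt_of_le hpos (measure_mono ?_)
      intro ω hω
      simp only [Set.mem_setOf_eq] at hω
      have hlog : 0 < Real.log (1 + f * r ω) := Real.log_pos (by nlinarith)
      simp only [Function.mem_support]
      have hne : Real.log (1 + f * r ω) - μ > 0 := by linarith
      exact pow_ne_zero 2 (ne_of_gt hne)
    · have hsub : {ω | r ω < 0 ∧ -1 ≤ r ω} ⊆
          Function.support fun ω => (Real.log (1 + f * r ω) - μ) ^ 2 := by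
        intro ω hω
        obtain ⟨hω1, hω2⟩ := hω
        have hden : 0 < 1 + f * r ω := pt_pos hω2 hfp.le hfl
        have hlog : Real.log (1 + f * r ω) < 0 := Real.log_neg hden (by nlinarith)
        simp only [Function.mem_support]
        have hne : Real.log (1 + f * r ω) - μ < 0 := by linarith
        exact pow_ne_zero 2 (ne_of_lt hne)
      refine lt_of_lt_of_le ?_ (measure_mono hsub)
      have hcompl : P {ω | ¬ (-1 ≤ r ω)} = 0 := ae_iff.mp h1
      have hcover : {ω | r ω < 0} ⊆ {ω | r ω < 0 ∧ -1 ≤ r ω} ∪ {ω | ¬ (-1 ≤ r ω)} := by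
        intro ω hω
        by_cases h : -1 ≤ r ω
        · exact Or.inl ⟨hω, h⟩
        · exact Or.inr h
      have := (measure_mono hcover).trans
        (measure_union_le (μ := P) {ω | r ω < 0 ∧ -1 ≤ r ω} {ω | ¬ (-1 ≤ r ω)})
      rw [hcompl, add_zero] at this
      exact lt_of_lt_of_le hneg this
  -- positivity of g at fstar
  have hgpos : 0 < ∫ ω, Real.log (1 + fstar * r ω) ∂P := by
    have hint : Integrable
        (fun ω => Real.log (1 + fstar * r ω) - fstar * (r ω / (1 + fstar * r ω))) P :=
      (hLint fstar hficc).sub ((hYint fstar hficc).const_mul fstar)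
    have hkey : 0 < ∫ ω,
        (Real.log (1 + fstar * r ω) - fstar * (r ω / (1 + fstar * r ω))) ∂P := by
      rw [integral_pos_iff_support_of_nonneg_ae ?_ hint]
      · refine lt_of_lt_of_le hpos (measure_mono ?_)
        intro ω hω
        simp only [Set.mem_setOf_eq] at hω
        have := pt_log_gt' (by linarith : (-1:ℝ) ≤ r ω) hf0 hf1 (ne_of_gt hω)
        simp only [Function.mem_support]
        intro hcontra
        nlinarith
      · filter_upwards [h1] with ω hω
        have := pt_log_ge' hω hf0 hf1
        simp only [Pi.zero_apply]
        linarith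
    rw [integral_sub (hLint fstar hficc) ((hYint fstar hficc).const_mul fstar),
      integral_const_mul, hzero, mul_zero, sub_zero] at hkey
    exact hkey
  -- positivity of W at fstar
  have hWpos : 0 < ∫ ω, 2 * Real.log (1 + fstar * r ω) * (r ω / (1 + fstar * r ω)) ∂P := by
    rw [integral_pos_iff_support_of_nonneg_ae ?_ (hDint fstar hficc)]
    · refine lt_of_lt_of_le hpos (measure_mono ?_)
      intro ω hω
      simp only [Set.mem_setOf_eq] at hω
      have := pt_prod_pos' (by linarith : (-1:ℝ) ≤ r ω) hf0 hf1 (ne_of_gt hω)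
      simp only [Function.mem_support]
      intro hcontra
      nlinarith
    · filter_upwards [h1] with ω hω
      have := pt_prod_nonneg' hω hf0 hf1
      simp only [Pi.zero_apply]
      nlinarith
  -- the SR function on (a,b) with variance replaced by the moment formula
  set gg : ℝ → ℝ := fun f => ∫ ω, Real.log (1 + f * r ω) ∂P with hgg_def
  set m2 : ℝ → ℝ := fun f => ∫ ω, (Real.log (1 + f * r ω)) ^ 2 ∂P with hm2_def
  set GG : ℝ → ℝ := fun f => ∫ ω, r ω / (1 + f * r ω) ∂P with hGG_def
  set WW : ℝ → ℝ := fun f => ∫ ω, 2 * Real.log (1 + f * r ω) * (r ω / (1 + f * r ω)) ∂P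
    with hWW_def
  set vv : ℝ → ℝ := fun f => m2 f - gg f ^ 2 with hvv_def
  set vd : ℝ → ℝ := fun f => WW f - 2 * gg f * GG f with hvd_def
  have hvvpos : ∀ f ∈ Set.Icc a b, 0 < vv f := fun f hf => hvarpos f hf
  have hvderiv : ∀ f₀ ∈ Set.Ioo a b, HasDerivAt vv (vd f₀) f₀ := by
    intro f₀ hf₀
    have h2 := (hgderiv f₀ hf₀).pow 2
    have h := (hm2deriv f₀ hf₀).sub h2
    refine h.congr_deriv ?_
    simp only [hvd_def, Nat.cast_ofNat, pow_one]
    ring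
  set sqv : ℝ → ℝ := fun f => Real.sqrt (vv f) with hsqv_def
  have hsqvpos : ∀ f ∈ Set.Icc a b, 0 < sqv f := fun f hf =>
    Real.sqrt_pos.2 (hvvpos f hf)
  have hsqderiv : ∀ f₀ ∈ Set.Ioo a b,
      HasDerivAt sqv (1 / (2 * sqv f₀) * vd f₀) f₀ := by
    intro f₀ hf₀
    have h := (Real.hasDerivAt_sqrt (ne_of_gt (hvvpos f₀ (Set.Ioo_subset_Icc_self hf₀)))).comp
      f₀ (hvderiv f₀ hf₀)
    exact h
  set SR2 : ℝ → ℝ := fun f => gg f / sqv f with hSR2_def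
  set sfun : ℝ → ℝ := fun f =>
    (GG f * sqv f - gg f * (1 / (2 * sqv f) * vd f)) / sqv f ^ 2 with hsfun_def
  have hSRderiv : ∀ f₀ ∈ Set.Ioo a b, HasDerivAt SR2 (sfun f₀) f₀ := by
    intro f₀ hf₀
    exact (hgderiv f₀ hf₀).div (hsqderiv f₀ hf₀)
      (ne_of_gt (hsqvpos f₀ (Set.Ioo_subset_Icc_self hf₀)))
  -- s(fstar) < 0
  have hGG0 : GG fstar = 0 := hzero
  have hvdpos : 0 < vd fstar := by
    simp only [hvd_def, hGG0, mul_zero, sub_zero]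
    exact hWpos
  have hsneg : sfun fstar < 0 := by
    have h1' := hsqvpos fstar hficc
    have h2' := hgpos
    simp only [hsfun_def, hGG0, zero_mul, zero_sub]
    apply div_neg_of_neg_of_pos
    · have : 0 < gg fstar * (1 / (2 * sqv fstar) * vd fstar) := by positivity
      linarith
    · positivity
  -- continuity of sfun at fstar
  have hIoo_nhds : Set.Ioo a b ∈ 𝓝 fstar := Ioo_mem_nhds haf hfb
  have hGGcont : ContinuousAt GG fstar := by
    refine continuousAt_of_dominated (F := fun x ω => r ω / (1 + x * r ω))
      (bound := fun _ => C)
      (Filter.Eventually.of_forall fun x => (hYmeas x).aestronglyMeasurable)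
      ?_ (integrable_const C) ?_
    · filter_upwards [hIoo_nhds] with x hx
      exact hYb x (Set.Ioo_subset_Icc_self hx)
    · filter_upwards [h1] with ω hω
      have hden : 0 < 1 + fstar * r ω := pt_pos hω hf0.le hf1
      exact ContinuousAt.div continuousAt_const (by fun_prop) (ne_of_gt hden)
  have hWWcont : ContinuousAt WW fstar := by
    refine continuousAt_of_dominated
      (F := fun x ω => 2 * Real.log (1 + x * r ω) * (r ω / (1 + x * r ω)))
      (bound := fun ω => 2 * B ω * C)
      (Filter.Eventually.of_forall fun x => (hDmeas x).aestronglyMeasurable)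
      ?_ hbnd2 ?_
    · filter_upwards [hIoo_nhds] with x hx
      filter_upwards [h1] with ω hω
      have hxicc := Set.Ioo_subset_Icc_self hx
      have h₁ := pt_log_bound hω ha0 hb1 hxicc
      have h₂ := pt_Y_bound hω ha0 hb1 hxicc
      rw [Real.norm_eq_abs, abs_mul, abs_mul, abs_two]
      have hC0 : 0 ≤ C := (abs_nonneg _).trans h₂
      have hm := mul_le_mul h₁ h₂ (abs_nonneg _) (hB0 ω)
      nlinarith [hm]
    · filter_upwards [h1] with ω hω
      have hden : 0 < 1 + fstar * r ω := pt_pos hω hf0.le hf1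
      have hc1 : ContinuousAt (fun x : ℝ => 1 + x * r ω) fstar := by fun_prop
      have hc2 : ContinuousAt (fun x : ℝ => Real.log (1 + x * r ω)) fstar :=
        hc1.log (ne_of_gt hden)
      have hc3 : ContinuousAt (fun x : ℝ => r ω / (1 + x * r ω)) fstar :=
        ContinuousAt.div continuousAt_const hc1 (ne_of_gt hden)
      exact (continuousAt_const.mul hc2).mul hc3
  have hggcont : ContinuousAt gg fstar := (hgderiv fstar ⟨haf, hfb⟩).continuousAt
  have hm2cont : ContinuousAt m2 fstar := (hm2deriv fstar ⟨haf, hfb⟩).continuousAt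
  have hvvcont : ContinuousAt vv fstar := hm2cont.sub (hggcont.pow 2)
  have hsqvcont : ContinuousAt sqv fstar := Real.continuous_sqrt.continuousAt.comp hvvcont
  have hvdcont : ContinuousAt vd fstar :=
    hWWcont.sub ((continuousAt_const.mul hggcont).mul hGGcont)
  have hscont : ContinuousAt sfun fstar := by
    have hden : sqv fstar ^ 2 ≠ 0 := by
      have := hsqvpos fstar hficc; positivity
    refine ContinuousAt.div ?_ (hsqvcont.pow 2) hden
    refine (hGGcont.mul hsqvcont).sub (hggcont.mul (ContinuousAt.mul ?_ hvdcont))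
    exact ContinuousAt.div continuousAt_const (continuousAt_const.mul hsqvcont)
      (by have := hsqvpos fstar hficc; positivity)
  -- eventually negative derivative
  have hev : ∀ᶠ f in 𝓝 fstar, sfun f < 0 := hscont (Iio_mem_nhds hsneg)
  obtain ⟨ε, hε, hball'⟩ := Metric.mem_nhds_iff.1 (Filter.inter_mem hev hIoo_nhds)
  rw [Real.ball_eq_Ioo] at hball'
  have hsub : Set.Ioo (fstar - ε) (fstar + ε) ⊆ {f | sfun f < 0} ∩ Set.Ioo a b := hball'
  -- SR2 is strictly antitone on the small interval
  have hanti : StrictAntiOn SR2 (Set.Ioo (fstar - ε) (fstar + ε)) := by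
    apply strictAntiOn_of_deriv_neg (convex_Ioo _ _)
    · intro x hx
      exact ((hSRderiv x (hsub hx).2).continuousAt).continuousWithinAt
    · intro x hx
      rw [interior_Ioo] at hx
      rw [(hSRderiv x (hsub hx).2).deriv]
      exact (hsub hx).1
  -- transfer from SR2 to the statement's function
  have hfun_eq : ∀ f ∈ Set.Ioo a b,
      (∫ ω, Real.log (1 + f * r ω) ∂P)
        / Real.sqrt (variance (fun ω => Real.log (1 + f * r ω)) P) = SR2 f := by
    intro f hf
    simp only [hSR2_def, hsqv_def, hvv_def, hgg_def, hm2_def]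
    rw [hvar_eq f (Set.Ioo_subset_Icc_self hf)]
  refine ⟨sfun fstar, hsneg, ?_, ε, hε, ?_⟩
  · refine (hSRderiv fstar ⟨haf, hfb⟩).congr_of_eventuallyEq ?_
    filter_upwards [hIoo_nhds] with f hf
    exact hfun_eq f hf
  · intro x hx y hy hxy
    have hx' := (hsub hx).2
    have hy' := (hsub hy).2
    simp only
    rw [hfun_eq x hx', hfun_eq y hy']
    exact hanti hx hy hxy
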